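/- Let $C$ be a convex polytope in $\mathbb{R}^3$ with nonempty interior, and let $K$ be a compact set such that $\operatorname{conv}(K) = C$ and $\pi_W(K) = \pi_W(C)$ for every two-dimensional linear subspace $W$ of $\mathbb{R}^3$. Then every edge of $C$ (every one-dimensional face of $C$) is contained in $K$; consequently $K$ is not totally disconnected. -/

import Mathlib

open Set Module

/-- Orthogonal projection onto a subspace, viewed as a map of the ambient space. -/
noncomputable def orthProj (W : Submodule ℝ (EuclideanSpace ℝ (Fin 3)))
    (x : EuclideanSpace ℝ (Fin 3)) : EuclideanSpace ℝ (Fin 3) :=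
  (W.orthogonalProjection x : EuclideanSpace ℝ (Fin 3))

/-- `E` is an edge of the convex set `C` in `ℝ³`: the intersection of `C` with a
supporting hyperplane which is a nondegenerate closed segment. -/
def IsEdgeOf (C E : Set (EuclideanSpace ℝ (Fin 3))) : Prop :=
  (∃ (f : EuclideanSpace ℝ (Fin 3) →L[ℝ] ℝ) (α : ℝ), f ≠ 0 ∧
    (∀ x ∈ C, f x ≤ α) ∧ (∃ x ∈ C, f x = α) ∧ E = {x ∈ C | f x = α}) ∧
  ∃ a b : EuclideanSpace ℝ (Fin 3), a ≠ b ∧ E = segment ℝ a b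

local notation "E3" => EuclideanSpace ℝ (Fin 3)

lemma pert {ι : Type*} (S : Finset ι) (f g : ι → ℝ) (M M' : ℝ)
    (hM : ∀ s ∈ S, f s ≤ M)
    (hM' : ∀ s ∈ S, f s = M → g s ≤ M') :
    ∃ ε : ℝ, 0 < ε ∧ ∀ s ∈ S,
      (f s + ε * g s ≤ M + ε * M') ∧ (f s + ε * g s = M + ε * M' ↔ (f s = M ∧ g s = M')) := by
  classical
  by_cases hTne : (S.filter (fun s => f s ≠ M)).Nonempty
  · set T := S.filter (fun s => f s ≠ M) with hT
    set ε := T.inf' hTne (fun s => (M - f s) / (1 + |g s - M'|)) with hε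
    have hεpos : 0 < ε := by
      rw [hε, Finset.lt_inf'_iff]
      intro s hs
      rw [hT, Finset.mem_filter] at hs
      have h1 : f s ≤ M := hM s hs.1
      have h2 : 0 < M - f s := by
        rcases lt_or_eq_of_le h1 with h | h
        · linarith
        · exact absurd h hs.2
      have h3 : (0:ℝ) < 1 + |g s - M'| := by positivity
      positivity
    refine ⟨ε, hεpos, fun s hs => ?_⟩
    by_cases hfs : f s = M
    · have hg : g s ≤ M' := hM' s hs hfs
      refine ⟨by nlinarith, ?_, ?_⟩
      · intro h
        have h1 : ε * (g s - M') = 0 := by rw [hfs] at h; linarith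
        rcases mul_eq_zero.mp h1 with h2 | h2
        · exact absurd h2 hεpos.ne'
        · exact ⟨hfs, by linarith⟩
      · rintro ⟨h1, h2⟩; rw [h1, h2]
    · have hsT : s ∈ T := by rw [hT, Finset.mem_filter]; exact ⟨hs, hfs⟩
      have hle : ε ≤ (M - f s) / (1 + |g s - M'|) := by
        rw [hε]; exact Finset.inf'_le _ hsT
      have hd : (0:ℝ) < 1 + |g s - M'| := by positivity
      have key : ε * (1 + |g s - M'|) ≤ M - f s := by
        rw [← le_div_iff₀ hd]; exact hle
      have habs1 : g s - M' ≤ |g s - M'| := le_abs_self _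
      have hstrict : f s + ε * g s < M + ε * M' := by nlinarith
      exact ⟨hstrict.le, fun h => absurd h hstrict.ne, fun ⟨h1, _⟩ => absurd h1 hfs⟩
  · refine ⟨1, one_pos, fun s hs => ?_⟩
    have hfs : f s = M := by
      by_contra h
      exact hTne ⟨s, Finset.mem_filter.mpr ⟨hs, h⟩⟩
    have hg : g s ≤ M' := hM' s hs hfs
    refine ⟨by nlinarith, ?_, ?_⟩
    · intro h
      exact ⟨hfs, by rw [hfs] at h; linarith⟩
    · rintro ⟨h1, h2⟩; rw [h1, h2]

lemma exists_unique_argmax (S : Finset E3) (hS : S.Nonempty) :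
    ∃ (g : E3 →L[ℝ] ℝ), ∃ v ∈ S, ∀ s ∈ S, g s ≤ g v ∧ (g s = g v ↔ s = v) := by
  classical
  set M0 := S.sup' hS (fun s => s 0) with hM0
  have hS1ne : (S.filter (fun s => s 0 = M0)).Nonempty := by
    obtain ⟨b, hb, hbe⟩ := Finset.exists_mem_eq_sup' hS (fun s => s 0)
    exact ⟨b, Finset.mem_filter.mpr ⟨hb, hbe.symm⟩⟩
  set M1 := (S.filter (fun s => s 0 = M0)).sup' hS1ne (fun s => s 1) with hM1
  obtain ⟨ε₁, hε₁, h₁⟩ := pert S (fun s => s 0) (fun s => s 1) M0 M1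
    (fun s hs => by rw [hM0]; exact Finset.le_sup' (fun s : EuclideanSpace ℝ (Fin 3) => s 0) hs)
    (fun s hs h => by rw [hM1]; exact Finset.le_sup' (fun s : EuclideanSpace ℝ (Fin 3) => s 1) (Finset.mem_filter.mpr ⟨hs, h⟩))
  set A1 := M0 + ε₁ * M1 with hA1
  have hS2ne : (S.filter (fun s => s 0 + ε₁ * s 1 = A1)).Nonempty := by
    obtain ⟨b, hb, hbe⟩ := Finset.exists_mem_eq_sup' hS1ne (fun s => s 1)
    have hbS := (Finset.mem_filter.mp hb).1
    have hb0 := (Finset.mem_filter.mp hb).2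
    exact ⟨b, Finset.mem_filter.mpr ⟨hbS, ((h₁ b hbS).2).mpr ⟨hb0, hbe.symm⟩⟩⟩
  set M2 := (S.filter (fun s => s 0 + ε₁ * s 1 = A1)).sup' hS2ne (fun s => s 2) with hM2
  obtain ⟨ε₂, hε₂, h₂⟩ := pert S (fun s => s 0 + ε₁ * s 1) (fun s => s 2) A1 M2
    (fun s hs => (h₁ s hs).1)
    (fun s hs h => by rw [hM2]; exact Finset.le_sup' (fun s : EuclideanSpace ℝ (Fin 3) => s 2) (Finset.mem_filter.mpr ⟨hs, h⟩))
  obtain ⟨v, hv, hve⟩ := Finset.exists_mem_eq_sup' hS2ne (fun s => s 2)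
  have hvS := (Finset.mem_filter.mp hv).1
  have hv01 : v 0 + ε₁ * v 1 = A1 := (Finset.mem_filter.mp hv).2
  have hv2 : v 2 = M2 := hve.symm
  set g : E3 →L[ℝ] ℝ :=
    EuclideanSpace.proj 0 + ε₁ • EuclideanSpace.proj 1 + ε₂ • EuclideanSpace.proj 2 with hg
  have hgapp : ∀ x : E3, g x = (x 0 + ε₁ * x 1) + ε₂ * x 2 := by
    intro x; simp [hg]
  refine ⟨g, v, hvS, fun s hs => ?_⟩
  have H := h₂ s hs
  have hgv : g v = A1 + ε₂ * M2 := by rw [hgapp, hv01, hv2]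
  constructor
  · rw [hgapp, hgv]; exact H.1
  · rw [hgapp, hgv]
    constructor
    · intro h
      obtain ⟨ha, h2'⟩ := H.2.mp h
      obtain ⟨h0, h1'⟩ := ((h₁ s hs).2).mp ha
      obtain ⟨hv0, hv1⟩ := ((h₁ v hvS).2).mp hv01
      ext i
      fin_cases i
      · exact h0.trans hv0.symm
      · exact h1'.trans hv1.symm
      · exact h2'.trans hv2.symm
    · intro h; rw [h, hv01, hv2]

lemma face_eq (S S₀ : Finset E3) (f : E3 →L[ℝ] ℝ) (M : ℝ)
    (hM : ∀ s ∈ S, f s ≤ M) (hsub : S₀ ⊆ S)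
    (hmem : ∀ s ∈ S, (f s = M ↔ s ∈ S₀)) :
    {x ∈ convexHull ℝ (S : Set E3) | f x = M} = convexHull ℝ (S₀ : Set E3) := by
  apply Set.Subset.antisymm
  · rintro x ⟨hxC, hxf⟩
    rw [Finset.convexHull_eq] at hxC
    obtain ⟨w, hw0, hw1, hwx⟩ := hxC
    rw [Finset.centerMass_eq_of_sum_1 _ _ hw1] at hwx
    have hfx : ∑ y ∈ S, w y * f y = M := by
      have h1 : f x = ∑ y ∈ S, w y * f y := by
        rw [← hwx, map_sum]
        exact Finset.sum_congr rfl (fun y _ => by simp [map_smul, smul_eq_mul])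
      rw [← hxf, h1]
    have hzero : ∀ y ∈ S, w y * (M - f y) = 0 := by
      have hsum : ∑ y ∈ S, w y * (M - f y) = 0 := by
        have h2 : ∑ y ∈ S, w y * M = M := by rw [← Finset.sum_mul, hw1, one_mul]
        calc ∑ y ∈ S, w y * (M - f y) = (∑ y ∈ S, w y * M) - ∑ y ∈ S, w y * f y := by
              rw [← Finset.sum_sub_distrib]; exact Finset.sum_congr rfl (fun y _ => by ring)
        _ = 0 := by rw [h2, hfx, sub_self]
      intro y hy
      exact (Finset.sum_eq_zero_iff_of_nonneg
        (fun y hy => mul_nonneg (hw0 y hy) (by linarith [hM y hy]))).mp hsum y hy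
    have hw0' : ∀ y ∈ S, y ∉ S₀ → w y = 0 := by
      intro y hy hy0
      rcases mul_eq_zero.mp (hzero y hy) with h | h
      · exact h
      · exact absurd ((hmem y hy).mp (by linarith)) hy0
    have hw1' : ∑ y ∈ S₀, w y = 1 := by
      rw [← hw1]
      exact Finset.sum_subset hsub (fun y hy hny => hw0' y hy hny)
    have hx0 : S₀.centerMass w id = x := by
      rw [Finset.centerMass_eq_of_sum_1 _ _ hw1', ← hwx]
      exact Finset.sum_subset hsub (fun y hy hny => by rw [hw0' y hy hny, zero_smul])
    rw [Finset.convexHull_eq]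
    exact ⟨w, fun y hy => hw0 y (hsub hy), hw1', hx0⟩
  · intro x hx
    refine ⟨convexHull_mono (Finset.coe_subset.mpr hsub) hx, ?_⟩
    have h3 : convexHull ℝ (S₀ : Set E3) ⊆ {y | f y = M} :=
      convexHull_min (fun s hs => (hmem s (hsub hs)).mpr hs)
        (convex_hyperplane ⟨f.map_add, f.map_smul⟩ M)
    exact h3 hx

lemma interior_empty_of_subset_hyperplane {C : Set E3}
    (f : E3 →L[ℝ] ℝ) (hf : f ≠ 0) (α : ℝ)
    (hC : C ⊆ {x | f x = α}) : interior C = ∅ := by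
  rw [Set.eq_empty_iff_forall_notMem]
  intro x hx
  obtain ⟨y, hy⟩ : ∃ y, f y ≠ 0 := by
    by_contra h
    push_neg at h
    exact hf (by ext z; simp [h z])
  have hy0 : y ≠ 0 := fun h => hy (by simp [h])
  have hynorm : (0:ℝ) < ‖y‖ := norm_pos_iff.mpr hy0
  obtain ⟨ε, hε, hball⟩ := Metric.mem_nhds_iff.mp (mem_interior_iff_mem_nhds.mp hx)
  set δ := ε / (2 * ‖y‖) with hδdef
  have hδ : 0 < δ := by positivity
  have h1 : x + δ • y ∈ Metric.ball x ε := by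
    rw [Metric.mem_ball, dist_eq_norm]
    have : x + δ • y - x = δ • y := by abel
    rw [this, norm_smul, Real.norm_eq_abs, abs_of_pos hδ, hδdef]
    rw [div_mul_eq_mul_div, mul_comm]
    calc ‖y‖ * ε / (2 * ‖y‖) = ε / 2 := by field_simp
    _ < ε := by linarith
  have h2 : f (x + δ • y) = α := hC (hball h1)
  have h3 : f x = α := hC (interior_subset hx)
  rw [map_add, map_smul, smul_eq_mul, h3] at h2
  have h4 : δ * f y = 0 := by linarith
  rcases mul_eq_zero.mp h4 with h | h
  exacts [absurd h hδ.ne', absurd h hy]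

lemma inner_ne_zero_clm {w : E3} (hw : w ≠ 0) : (innerSL ℝ w : E3 →L[ℝ] ℝ) ≠ 0 := by
  intro h
  have := DFunLike.congr_fun h w
  simp only [innerSL_apply_apply, ContinuousLinearMap.zero_apply] at this
  exact hw (inner_self_eq_zero.mp this)

lemma orth_complement_ne_bot {u : E3} (hu : u ≠ 0) :
    ∃ w ∈ (ℝ ∙ u)ᗮ, w ≠ 0 := by
  have h1 : finrank ℝ (ℝ ∙ u) + finrank ℝ (ℝ ∙ u)ᗮ = 3 := by
    rw [Submodule.finrank_add_finrank_orthogonal, finrank_euclideanSpace_fin]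
  rw [finrank_span_singleton hu] at h1
  have h2 : (ℝ ∙ u)ᗮ ≠ ⊥ := by
    intro hbot
    rw [hbot, finrank_bot] at h1
    omega
  exact Submodule.ne_bot_iff _ |>.mp h2

lemma edge_exists (S : Finset E3) (C : Set E3)
    (hC : C = convexHull ℝ (S : Set E3))
    (hint : (interior C).Nonempty) :
    ∃ Ed, IsEdgeOf C Ed := by
  classical
  have hSne : S.Nonempty := by
    rcases hint with ⟨x, hx⟩
    have hxC : x ∈ C := interior_subset hx
    rcases S.eq_empty_or_nonempty with h | h
    · rw [hC, h] at hxC; simp at hxC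
    · exact h
  obtain ⟨g, v, hvS, hv⟩ := exists_unique_argmax S hSne
  set S' := S.filter (fun s => s ≠ v) with hS'
  have hS'ne : S'.Nonempty := by
    by_contra h
    rw [Finset.not_nonempty_iff_eq_empty] at h
    have hsub : (S : Set E3) ⊆ {x | (EuclideanSpace.proj (0:Fin 3) : E3 →L[ℝ] ℝ) x = v 0} := by
      intro s hs
      have hsv : s = v := by
        by_contra hne
        have : s ∈ S' := Finset.mem_filter.mpr ⟨hs, hne⟩
        rw [h] at this
        exact absurd this (Finset.notMem_empty s)
      simp [hsv]
    have hCsub : C ⊆ {x | (EuclideanSpace.proj (0:Fin 3) : E3 →L[ℝ] ℝ) x = v 0} := by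
      rw [hC]
      exact convexHull_min hsub (convex_hyperplane ⟨map_add _, map_smul _⟩ _)
    have hproj0 : (EuclideanSpace.proj (0:Fin 3) : E3 →L[ℝ] ℝ) ≠ 0 := by
      intro h0
      have := DFunLike.congr_fun h0 (EuclideanSpace.single 0 1)
      simp at this
    have := interior_empty_of_subset_hyperplane _ hproj0 _ hCsub
    rw [this] at hint
    exact Set.not_nonempty_empty hint
  have hgs : ∀ s ∈ S', g s < g v := by
    intro s hs
    obtain ⟨hsS, hsv⟩ := Finset.mem_filter.mp hs
    rcases lt_or_eq_of_le (hv s hsS).1 with h | h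
    · exact h
    · exact absurd ((hv s hsS).2.mp h) hsv
  have hts : ∀ s ∈ S', 0 < g v - g s := fun s hs => by linarith [hgs s hs]
  set z : E3 → E3 := fun s => (g v - g s)⁻¹ • (s - v) with hz
  set Z := S'.image z with hZ
  have hZne : Z.Nonempty := hS'ne.image z
  obtain ⟨φ, zb, hzbZ, hφ⟩ := exists_unique_argmax Z hZne
  set β := φ zb with hβ
  set h : E3 →L[ℝ] ℝ := φ + β • g with hh
  have happ : ∀ x : E3, h x = φ x + β * g x := fun x => by simp [hh]
  have hdecomp : ∀ s ∈ S', s - v = (g v - g s) • z s := by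
    intro s hs
    rw [hz]
    exact (smul_inv_smul₀ (hts s hs).ne' _).symm
  have hzmem : ∀ s ∈ S', z s ∈ Z := fun s hs => Finset.mem_image_of_mem z hs
  have hface : ∀ s ∈ S, h s ≤ h v ∧ (h s = h v ↔ s = v ∨ z s = zb) := by
    intro s hsS
    by_cases hsv : s = v
    · exact ⟨le_of_eq (by rw [hsv]), by simp [hsv]⟩
    · have hs' : s ∈ S' := Finset.mem_filter.mpr ⟨hsS, hsv⟩
      have hφz := hφ (z s) (hzmem s hs')
      have h1 : φ s - φ v = (g v - g s) * φ (z s) := by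
        rw [← map_sub, hdecomp s hs', map_smul, smul_eq_mul]
      have hkey : h s - h v = (g v - g s) * (φ (z s) - β) := by
        rw [happ, happ]
        linear_combination h1
      have ht := hts s hs'
      constructor
      · nlinarith [hφz.1]
      · constructor
        · intro he
          right
          rw [he, sub_self] at hkey
          have : φ (z s) - β = 0 := by
            rcases mul_eq_zero.mp hkey.symm with hcase | hcase
            · exact absurd hcase ht.ne'
            · exact hcase
          exact hφz.2.mp (by linarith)
        · rintro (hcase | hcase)
          · exact absurd hcase hsv
          · have : φ (z s) = β := by rw [hcase]
            have : h s - h v = 0 := by rw [hkey, this, sub_self, mul_zero]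
            linarith
  set α := h v with hα
  set A := S.filter (fun s => h s = α) with hA
  obtain ⟨b, hbS', hbz⟩ := Finset.mem_image.mp hzbZ
  have hbS : b ∈ S := (Finset.mem_filter.mp hbS').1
  have hbv : b ≠ v := (Finset.mem_filter.mp hbS').2
  have hbA : b ∈ A := Finset.mem_filter.mpr ⟨hbS, (hface b hbS).2.mpr (Or.inr hbz)⟩
  have hvA : v ∈ A := Finset.mem_filter.mpr ⟨hvS, rfl⟩
  set u := zb with hu
  have hu0 : u ≠ 0 := by
    intro h0
    have hd := hdecomp b hbS'
    rw [hbz, h0, smul_zero] at hd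
    exact hbv (sub_eq_zero.mp hd)
  set τ : E3 → ℝ := fun s => g v - g s with hτ
  have hline : ∀ s ∈ A, s = v + τ s • u := by
    intro s hsA
    obtain ⟨hsS, hsh⟩ := Finset.mem_filter.mp hsA
    by_cases hsv : s = v
    · rw [hsv, hτ]; simp
    · have hs' : s ∈ S' := Finset.mem_filter.mpr ⟨hsS, hsv⟩
      have hzs : z s = u := by
        rcases (hface s hsS).2.mp hsh with hc | hc
        · exact absurd hc hsv
        · exact hc
      have hd := hdecomp s hs'
      rw [hzs] at hd
      rw [hτ]
      rw [← hd]
      abel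
  set T := A.image τ with hT
  have hTne : T.Nonempty := ⟨τ v, Finset.mem_image_of_mem τ hvA⟩
  have hcoe : (A : Set E3) = (fun t : ℝ => v + t • u) '' (T : Set ℝ) := by
    ext x
    constructor
    · intro hx
      have hxA : x ∈ A := hx
      exact ⟨τ x, by exact_mod_cast Finset.mem_image_of_mem τ hxA, (hline x hxA).symm⟩
    · rintro ⟨t, htT, rfl⟩
      obtain ⟨s, hsA, hst⟩ := Finset.mem_image.mp (by exact_mod_cast htT)
      rw [← hst]
      show v + τ s • u ∈ (A : Set (EuclideanSpace ℝ (Fin 3)))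
      rw [← hline s hsA]
      exact hsA
  set m := T.min' hTne with hm
  set M := T.max' hTne with hM
  have h0T : (0:ℝ) ∈ T := by
    have hτv : τ v = 0 := by rw [hτ]; simp
    rw [← hτv]; exact Finset.mem_image_of_mem τ hvA
  have hbT : τ b ∈ T := Finset.mem_image_of_mem τ hbA
  have hm0 : m ≤ 0 := Finset.min'_le T 0 h0T
  have hMb : 0 < M := lt_of_lt_of_le (hts b hbS') (Finset.le_max' T (τ b) hbT)
  have hmM : m ≤ M := le_trans hm0 hMb.le
  have hconvT : convexHull ℝ (T : Set ℝ) = Set.Icc m M := by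
    apply Set.Subset.antisymm
    · exact convexHull_min
        (fun t ht => ⟨T.min'_le t (Finset.mem_coe.mp ht), T.le_max' t (Finset.mem_coe.mp ht)⟩)
        (convex_Icc m M)
    · rw [← segment_eq_Icc hmM]
      exact segment_subset_convexHull (Finset.mem_coe.mpr (T.min'_mem hTne))
        (Finset.mem_coe.mpr (T.max'_mem hTne))
  set ℓ : ℝ →ᵃ[ℝ] EuclideanSpace ℝ (Fin 3) := AffineMap.lineMap v (v + u) with hℓdef
  have hℓ : ∀ t : ℝ, ℓ t = v + t • u := by
    intro t
    rw [hℓdef, AffineMap.lineMap_apply, vsub_eq_sub, vadd_eq_add, add_sub_cancel_left]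
    abel
  have hEconv : convexHull ℝ (A : Set E3) = segment ℝ (v + m • u) (v + M • u) := by
    rw [hcoe]
    have himg : (fun t : ℝ => v + t • u) '' (T : Set ℝ) = ℓ '' (T : Set ℝ) := by
      ext x
      simp only [Set.mem_image]
      constructor <;> (rintro ⟨t, ht, rfl⟩; exact ⟨t, ht, by rw [hℓ]⟩)
    rw [himg, ← AffineMap.image_convexHull, hconvT, ← segment_eq_Icc hmM, image_segment, hℓ, hℓ]
  have hne : v + m • u ≠ v + M • u := by
    intro heq
    have h1 : m • u = M • u := add_left_cancel heq
    have h2 : (m - M) • u = 0 := by rw [sub_smul, h1, sub_self]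
    rcases smul_eq_zero.mp h2 with h3 | h3
    · have h4 : m = M := by have := sub_eq_zero.mp h3; linarith
      linarith
    · exact hu0 h3
  have hhalf : ∀ x ∈ C, h x ≤ α := by
    rw [hC]
    intro x hx
    exact convexHull_min (fun s hs => (hface s hs).1)
      (convex_halfSpace_le ⟨h.map_add, h.map_smul⟩ α) hx
  have hAmem : ∀ s ∈ S, (h s = α ↔ s ∈ A) := by
    intro s hs
    constructor
    · intro he; exact Finset.mem_filter.mpr ⟨hs, he⟩
    · intro hsA; exact (Finset.mem_filter.mp hsA).2
  have hfaceC : {x ∈ C | h x = α} = segment ℝ (v + m • u) (v + M • u) := by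
    rw [hC, face_eq S A h α (fun s hs => (hface s hs).1) (Finset.filter_subset _ _) hAmem, hEconv]
  have hvC : v ∈ C := by rw [hC]; exact subset_convexHull ℝ _ hvS
  have hh0 : h ≠ 0 := by
    intro h0
    obtain ⟨w, hwmem, hw0⟩ := orth_complement_ne_bot hu0
    have hwu : (inner ℝ w u : ℝ) = 0 := by
      rw [real_inner_comm]
      exact (Submodule.mem_orthogonal _ w).mp hwmem u (Submodule.mem_span_singleton_self u)
    have hsegsub : segment ℝ (v + m • u) (v + M • u) ⊆
        {x : EuclideanSpace ℝ (Fin 3) | (innerSL ℝ w) x = (inner ℝ w v : ℝ)} := by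
      apply (convex_hyperplane ⟨(innerSL ℝ w).map_add, (innerSL ℝ w).map_smul⟩
        ((inner ℝ w v : ℝ))).segment_subset
      · simp only [Set.mem_setOf_eq, innerSL_apply_apply, inner_add_right, real_inner_smul_right,
          hwu, mul_zero, add_zero]
      · simp only [Set.mem_setOf_eq, innerSL_apply_apply, inner_add_right, real_inner_smul_right,
          hwu, mul_zero, add_zero]
    have hCsub : C ⊆ {x : EuclideanSpace ℝ (Fin 3) | (innerSL ℝ w) x = (inner ℝ w v : ℝ)} := by
      intro x hx
      have hxα : h x = α := by rw [hα, h0]; simp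
      exact hsegsub (hfaceC ▸ (⟨hx, hxα⟩ : x ∈ {x ∈ C | h x = α}))
    have hie := interior_empty_of_subset_hyperplane _ (inner_ne_zero_clm hw0) _ hCsub
    rw [hie] at hint
    exact Set.not_nonempty_empty hint
  exact ⟨_, ⟨⟨h, α, hh0, hhalf, ⟨v, hvC, rfl⟩, hfaceC.symm⟩, v + m • u, v + M • u, hne, rfl⟩⟩

lemma edge_subset_K
    (C : Set E3) (S : Finset E3) (hC : C = convexHull ℝ (S : Set E3))
    (hint : (interior C).Nonempty)
    (K : Set E3)
    (hKhull : convexHull ℝ K = C)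
    (hKproj : ∀ (W : Submodule ℝ E3), finrank ℝ W = 2 → orthProj W '' K = orthProj W '' C)
    (Ed : Set E3) (hEd : IsEdgeOf C Ed) : Ed ⊆ K := by
  classical
  obtain ⟨⟨f, α, hf0, hfle, ⟨x₀, hx₀C, hx₀⟩, hEeq⟩, a, b, hab, hEseg⟩ := hEd
  set n : E3 := (InnerProductSpace.toDual ℝ (EuclideanSpace ℝ (Fin 3))).symm f with hn
  have hfn : ∀ y : E3, f y = (inner ℝ n y : ℝ) := by
    intro y
    rw [hn]
    exact (InnerProductSpace.toDual_symm_apply).symm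
  -- a vector orthogonal to both the normal and the edge direction
  obtain ⟨u, hu0, hun, huba⟩ :
      ∃ u : E3, u ≠ 0 ∧ (inner ℝ u n : ℝ) = 0 ∧ (inner ℝ u (b - a) : ℝ) = 0 := by
    set W0 : Submodule ℝ E3 := Submodule.span ℝ {n, b - a} with hW0def
    have hrank : finrank ℝ W0 ≤ 2 := by
      refine le_trans (finrank_span_le_card ({n, b - a} : Set E3)) ?_
      rw [Set.toFinset_insert, Set.toFinset_singleton]
      exact (Finset.card_insert_le _ _).trans (by simp)
    have hsum : finrank ℝ W0 + finrank ℝ W0ᗮ = 3 := by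
      rw [Submodule.finrank_add_finrank_orthogonal, finrank_euclideanSpace_fin]
    have hne : W0ᗮ ≠ ⊥ := by
      intro hbot
      rw [hbot, finrank_bot] at hsum
      omega
    obtain ⟨u, humem, hu0⟩ := (Submodule.ne_bot_iff _).mp hne
    refine ⟨u, hu0, ?_, ?_⟩
    · rw [real_inner_comm]
      exact (Submodule.mem_orthogonal _ u).mp humem n
        (Submodule.subset_span (Set.mem_insert _ _))
    · rw [real_inner_comm]
      exact (Submodule.mem_orthogonal _ u).mp humem (b - a)
        (Submodule.subset_span (Set.mem_insert_of_mem _ rfl))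
  have hfu : f u = 0 := by rw [hfn, real_inner_comm]; exact hun
  have hconstE : ∀ y ∈ segment ℝ a b, (inner ℝ u y : ℝ) = inner ℝ u a := by
    rintro y ⟨p, q, hp, hq, hpq, rfl⟩
    have hub : (inner ℝ u b : ℝ) = inner ℝ u a := by
      have h1 : (inner ℝ u (b - a) : ℝ) = 0 := huba
      rw [inner_sub_right] at h1
      linarith
    rw [inner_add_right, real_inner_smul_right, real_inner_smul_right, hub]
    linear_combination (inner ℝ u a : ℝ) * hpq
  have haE : a ∈ Ed := hEseg ▸ left_mem_segment ℝ a b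
  have haC : a ∈ C := (hEeq ▸ haE).1
  have hfa : f a = α := (hEeq ▸ haE).2
  have hsC : ∀ s ∈ S, s ∈ C := fun s hs => hC ▸ subset_convexHull ℝ _ hs
  set S' := S.filter (fun s => f s ≠ α) with hS'
  have hS'ne : S'.Nonempty := by
    by_contra hne
    rw [Finset.not_nonempty_iff_eq_empty] at hne
    have hsub : (S : Set E3) ⊆ {x | f x = α} := by
      intro s hs
      by_contra hne2
      have : s ∈ S' := Finset.mem_filter.mpr ⟨hs, hne2⟩
      rw [hne] at this
      exact absurd this (Finset.notMem_empty s)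
    have hCsub : C ⊆ {x | f x = α} := by
      rw [hC]
      exact convexHull_min hsub (convex_hyperplane ⟨f.map_add, f.map_smul⟩ α)
    have := interior_empty_of_subset_hyperplane f hf0 α hCsub
    rw [this] at hint
    exact Set.not_nonempty_empty hint
  set c : ℝ := inner ℝ u a with hc
  set ε := S'.inf' hS'ne (fun s => (α - f s) / (1 + |(inner ℝ u s : ℝ) - c|)) with hε
  have hεpos : 0 < ε := by
    rw [hε, Finset.lt_inf'_iff]
    intro s hs
    obtain ⟨hsS, hsne⟩ := Finset.mem_filter.mp hs
    have h1 : f s ≤ α := hfle s (hsC s hsS)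
    have h2 : 0 < α - f s := by
      rcases lt_or_eq_of_le h1 with h | h
      · linarith
      · exact absurd h hsne
    have h3 : (0:ℝ) < 1 + |(inner ℝ u s : ℝ) - c| := by positivity
    positivity
  have hlin1 : IsLinearMap ℝ (fun y : E3 => f y + ε * (inner ℝ u y : ℝ)) := by
    constructor
    · intro y z; rw [map_add, inner_add_right]; ring
    · intro r y; rw [map_smul, real_inner_smul_right, smul_eq_mul, smul_eq_mul]; ring
  have hlin2 : IsLinearMap ℝ (fun y : E3 => f y - ε * (inner ℝ u y : ℝ)) := by
    constructor
    · intro y z; rw [map_add, inner_add_right]; ring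
    · intro r y; rw [map_smul, real_inner_smul_right, smul_eq_mul, smul_eq_mul]; ring
  have hkey : ∀ s ∈ S, (f s + ε * inner ℝ u s ≤ α + ε * c) ∧ (f s - ε * inner ℝ u s ≤ α - ε * c) := by
    intro s hs
    by_cases hsα : f s = α
    · have hsE : s ∈ Ed := hEeq ▸ ⟨hsC s hs, hsα⟩
      have hsseg : s ∈ segment ℝ a b := hEseg ▸ hsE
      have : (inner ℝ u s : ℝ) = c := hconstE s hsseg
      rw [this, hsα]
      exact ⟨le_refl _, le_refl _⟩
    · have hsS' : s ∈ S' := Finset.mem_filter.mpr ⟨hs, hsα⟩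
      have hle : ε ≤ (α - f s) / (1 + |(inner ℝ u s : ℝ) - c|) := by
        rw [hε]; exact Finset.inf'_le _ hsS'
      have hd : (0:ℝ) < 1 + |(inner ℝ u s : ℝ) - c| := by positivity
      have hkey2 : ε * (1 + |(inner ℝ u s : ℝ) - c|) ≤ α - f s := by
        rw [← le_div_iff₀ hd]; exact hle
      have habs1 : (inner ℝ u s : ℝ) - c ≤ |(inner ℝ u s : ℝ) - c| := le_abs_self _
      have habs2 : -((inner ℝ u s : ℝ) - c) ≤ |(inner ℝ u s : ℝ) - c| := neg_le_abs _
      constructor <;> nlinarith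
  have hB1 : ∀ y ∈ C, f y + ε * (inner ℝ u y : ℝ) ≤ α + ε * c := by
    rw [hC]
    intro y hy
    exact convexHull_min (fun s hs => (hkey s hs).1) (convex_halfSpace_le hlin1 (α + ε * c)) hy
  have hB2 : ∀ y ∈ C, f y - ε * (inner ℝ u y : ℝ) ≤ α - ε * c := by
    rw [hC]
    intro y hy
    exact convexHull_min (fun s hs => (hkey s hs).2) (convex_halfSpace_le hlin2 (α - ε * c)) hy
  -- now the fiber argument
  intro x hxE
  have hxC : x ∈ C := (hEeq ▸ hxE).1
  have hfx : f x = α := (hEeq ▸ hxE).2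
  have hxseg : x ∈ segment ℝ a b := hEseg ▸ hxE
  have hxc : (inner ℝ u x : ℝ) = c := hconstE x hxseg
  set W : Submodule ℝ E3 := (ℝ ∙ u)ᗮ with hW
  have hWrank : finrank ℝ W = 2 := by
    rw [hW]
    have hsum : finrank ℝ (ℝ ∙ u) + finrank ℝ (ℝ ∙ u)ᗮ = 3 := by
      rw [Submodule.finrank_add_finrank_orthogonal, finrank_euclideanSpace_fin]
    rw [finrank_span_singleton hu0] at hsum
    omega
  have himg := hKproj W hWrank
  have hmem : orthProj W x ∈ orthProj W '' K := by
    rw [himg]; exact ⟨x, hxC, rfl⟩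
  obtain ⟨k, hkK, hkeq⟩ := hmem
  have hkx : k - x ∈ (ℝ ∙ u) := by
    have h1 : k - orthProj W k ∈ Wᗮ := Submodule.sub_starProjection_mem_orthogonal (K := W) k
    have h2 : x - orthProj W x ∈ Wᗮ := Submodule.sub_starProjection_mem_orthogonal (K := W) x
    have h3 : (k - orthProj W k) - (x - orthProj W x) ∈ Wᗮ := sub_mem h1 h2
    rw [hkeq] at h3
    have h4 : (k - orthProj W x) - (x - orthProj W x) = k - x := by abel
    rw [h4] at h3
    rwa [hW, Submodule.orthogonal_orthogonal] at h3
  obtain ⟨t, ht⟩ := Submodule.mem_span_singleton.mp hkx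
  have hk : k = x + t • u := by rw [ht]; abel
  have hkC : k ∈ C := hKhull ▸ subset_convexHull ℝ K hkK
  have hfk : f k = α := by
    rw [hk, map_add, map_smul, smul_eq_mul, hfu, hfx]; ring
  have hik : (inner ℝ u k : ℝ) = c + t * (inner ℝ u u : ℝ) := by
    rw [hk, inner_add_right, real_inner_smul_right, hxc]
  have huu : (0:ℝ) < inner ℝ u u := by
    rw [real_inner_self_eq_norm_sq]
    have : (0:ℝ) < ‖u‖ := norm_pos_iff.mpr hu0
    positivity
  have h1 := hB1 k hkC
  have h2 := hB2 k hkC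
  rw [hfk, hik] at h1 h2
  have ht1 : t ≤ 0 := by nlinarith [h1, mul_pos hεpos huu]
  have ht2 : 0 ≤ t := by nlinarith [h2, mul_pos hεpos huu]
  have ht0 : t = 0 := le_antisymm ht1 ht2
  have : k = x := by rw [hk, ht0, zero_smul, add_zero]
  rwa [← this]

/-- If a convex polytope `C ⊆ ℝ³` with nonempty interior is 2-dimensional
fractal-decomposable with a compact set `K`, then every edge of `C` is contained in `K`;
consequently `K` is not totally disconnected. -/
theorem edges_subset_of_twoDim_fractalDecomposable
    (C : Set (EuclideanSpace ℝ (Fin 3))) (S : Finset (EuclideanSpace ℝ (Fin 3)))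
    (hC : C = convexHull ℝ (S : Set (EuclideanSpace ℝ (Fin 3))))
    (hint : (interior C).Nonempty)
    (K : Set (EuclideanSpace ℝ (Fin 3))) (hKcpt : IsCompact K)
    (hKhull : convexHull ℝ K = C)
    (hKproj : ∀ (W : Submodule ℝ (EuclideanSpace ℝ (Fin 3))), finrank ℝ W = 2 →
      orthProj W '' K = orthProj W '' C) :
    (∀ E : Set (EuclideanSpace ℝ (Fin 3)), IsEdgeOf C E → E ⊆ K) ∧
    ¬ IsTotallyDisconnected K := by
  have part1 : ∀ E : Set (EuclideanSpace ℝ (Fin 3)), IsEdgeOf C E → E ⊆ K :=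
    fun E hE => edge_subset_K C S hC hint K hKhull hKproj E hE
  refine ⟨part1, ?_⟩
  obtain ⟨Ed, hEd⟩ := edge_exists S C hC hint
  intro htd
  have hsub : Ed ⊆ K := part1 Ed hEd
  obtain ⟨_, a, b, hab, hEseg⟩ := hEd
  have hconn : IsPreconnected Ed := by rw [hEseg]; exact (convex_segment a b).isPreconnected
  have hsing := htd Ed hsub hconn
  exact hab (hsing (hEseg ▸ left_mem_segment ℝ a b) (hEseg ▸ right_mem_segment ℝ a b))
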